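/- (Straightening diffeomorphism of the ellipse, Lemma 6.1, part 1.) Let γ ≥ 1. Then: (i) for every θ ∈ (−π/2, π/2), the derivative of θ ↦ arctan(tanθ/γ) equals 1/g_γ(θ); (ii) ∫₀^{2π} dθ/g_γ(θ) = 2π; (iii) consequently the function β(θ) := ∫₀^θ (1/g_γ(s) − 1) ds is C^∞, odd, π-periodic, and coincides with arctan(tanθ/γ) − θ for every θ ∈ (−π/2, π/2). -/

import Mathlib

open Real MeasureTheory Filter Set Topology

/-- `g_γ(θ) := γ cos²θ + γ⁻¹ sin²θ`. -/
noncomputable def gell (γ θ : ℝ) : ℝ := γ * Real.cos θ ^ 2 + γ⁻¹ * Real.sin θ ^ 2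

/-- `β(θ) := ∫₀^θ (1/g_γ(s) − 1) ds`. -/
noncomputable def betaStr (γ θ : ℝ) : ℝ := ∫ s in (0:ℝ)..θ, (1 / gell γ s - 1)

/-- Straightening diffeomorphism of the ellipse (Lemma 6.1, part 1). -/
theorem straightening (γ : ℝ) (hγ : 1 ≤ γ) :
    -- (i)
    (∀ θ ∈ Set.Ioo (-(π / 2)) (π / 2),
      HasDerivAt (fun t => Real.arctan (Real.tan t / γ)) (1 / gell γ θ) θ) ∧
    -- (ii)
    (∫ θ in (0:ℝ)..(2 * π), 1 / gell γ θ) = 2 * π ∧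
    -- (iii)
    ContDiff ℝ (⊤ : ℕ∞) (betaStr γ) ∧
    (∀ θ, betaStr γ (-θ) = -betaStr γ θ) ∧
    (∀ θ, betaStr γ (θ + π) = betaStr γ θ) ∧
    (∀ θ ∈ Set.Ioo (-(π / 2)) (π / 2),
      betaStr γ θ = Real.arctan (Real.tan θ / γ) - θ) := by
  have hγ0 : (0:ℝ) < γ := lt_of_lt_of_le one_pos hγ
  have hγi : (0:ℝ) < γ⁻¹ := inv_pos.2 hγ0
  have hγle : γ⁻¹ ≤ γ := by
    have h1 : γ⁻¹ ≤ 1 := inv_le_one_of_one_le₀ hγ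
    linarith
  have hg : ∀ θ, 0 < gell γ θ := by
    intro θ
    have h1 := Real.sin_sq_add_cos_sq θ
    have h2 := sq_nonneg (Real.cos θ)
    have h3 := sq_nonneg (Real.sin θ)
    unfold gell
    nlinarith
  have hgne : ∀ θ, gell γ θ ≠ 0 := fun θ => (hg θ).ne'
  -- continuity/smoothness of gell
  have hgsmooth : ContDiff ℝ (⊤ : ℕ∞) (gell γ) := by
    unfold gell
    exact (contDiff_const.mul (Real.contDiff_cos.pow 2)).add
      (contDiff_const.mul (Real.contDiff_sin.pow 2))
  have hFsmooth : ContDiff ℝ (⊤ : ℕ∞) (fun s => 1 / gell γ s - 1) :=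
    (contDiff_const.div hgsmooth hgne).sub contDiff_const
  have hfcont : Continuous (fun s => 1 / gell γ s) :=
    continuous_const.div (hgsmooth.continuous) hgne
  have hFcont : Continuous (fun s => 1 / gell γ s - 1) := hFsmooth.continuous
  have hfint : ∀ a b : ℝ, IntervalIntegrable (fun s => 1 / gell γ s) volume a b :=
    fun a b => hfcont.intervalIntegrable a b
  have hFint : ∀ a b : ℝ, IntervalIntegrable (fun s => 1 / gell γ s - 1) volume a b :=
    fun a b => hFcont.intervalIntegrable a b
  -- part (i)
  have part1 : ∀ θ ∈ Set.Ioo (-(π / 2)) (π / 2),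
      HasDerivAt (fun t => Real.arctan (Real.tan t / γ)) (1 / gell γ θ) θ := by
    intro θ hθ
    have hc : Real.cos θ ≠ 0 := (Real.cos_pos_of_mem_Ioo hθ).ne'
    have htan : HasDerivAt Real.tan (1 / Real.cos θ ^ 2) θ := Real.hasDerivAt_tan hc
    have h2 : HasDerivAt (fun t => Real.tan t / γ) (1 / Real.cos θ ^ 2 / γ) θ :=
      htan.div_const γ
    have h3 := (Real.hasDerivAt_arctan (Real.tan θ / γ)).comp θ h2
    convert h3 using 1
    · rfl
    · rfl
    · rfl
    have hs := Real.sin_sq_add_cos_sq θ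
    have hd : 1 + (Real.tan θ / γ) ^ 2 ≠ 0 := by positivity
    rw [Real.tan_eq_sin_div_cos]
    unfold gell
    field_simp
  -- primitive of 1/g
  set G : ℝ → ℝ := fun θ => ∫ s in (0:ℝ)..θ, 1 / gell γ s with hGdef
  have hGIoo : ∀ θ ∈ Set.Ioo (-(π / 2)) (π / 2), G θ = Real.arctan (Real.tan θ / γ) := by
    intro θ hθ
    have h0 : (0:ℝ) ∈ Set.Ioo (-(π / 2)) (π / 2) := by
      constructor <;> linarith [Real.pi_pos]
    have hsub : Set.uIcc (0:ℝ) θ ⊆ Set.Ioo (-(π / 2)) (π / 2) :=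
      Set.ordConnected_Ioo.uIcc_subset h0 hθ
    have heval := intervalIntegral.integral_eq_sub_of_hasDerivAt
      (f := fun t => Real.arctan (Real.tan t / γ)) (f' := fun s => 1 / gell γ s)
      (fun x hx => part1 x (hsub hx)) (hfint 0 θ)
    rw [hGdef]
    simp only [heval, Real.tan_zero, zero_div, Real.arctan_zero, sub_zero]
  -- evenness/periodicity of gell
  have hgeven : ∀ θ, gell γ (-θ) = gell γ θ := by intro θ; simp [gell]
  have hgper : ∀ θ, gell γ (θ + π) = gell γ θ := by
    intro θ; simp [gell, Real.cos_add_pi, Real.sin_add_pi]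
  have hper : Function.Periodic (fun s => 1 / gell γ s) π := fun x => by
    simp only [hgper]
  have hFper : Function.Periodic (fun s => 1 / gell γ s - 1) π := fun x => by
    simp only [hgper]
  -- odd integral helper for even integrands
  have hoddgen : ∀ (F : ℝ → ℝ), (∀ x, F (-x) = F x) →
      ∀ θ : ℝ, (∫ s in (0:ℝ)..(-θ), F s) = -∫ s in (0:ℝ)..θ, F s := by
    intro F hFe θ
    have h1 : (∫ x in (-θ)..(0:ℝ), F (-x)) = ∫ x in (-(0:ℝ))..(-(-θ)), F x :=
      intervalIntegral.integral_comp_neg (a := -θ) (b := 0) (f := F)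
    simp only [neg_zero, neg_neg] at h1
    have h2 : (∫ x in (-θ)..(0:ℝ), F (-x)) = ∫ x in (-θ)..(0:ℝ), F x := by
      simp only [hFe]
    rw [h2] at h1
    rw [intervalIntegral.integral_symm, h1]
  -- G is odd and continuous
  have hGodd : ∀ θ, G (-θ) = -G θ := by
    intro θ
    exact hoddgen (fun s => 1 / gell γ s) (fun x => by show 1 / gell γ (-x) = 1 / gell γ x; rw [hgeven]) θ
  have hGcont : Continuous G :=
    intervalIntegral.continuous_primitive (fun a b => hfint a b) 0
  -- G (π/2) = π/2 via limits
  have hGhalf : G (π / 2) = π / 2 := by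
    have hmem : Set.Ioo (-(π / 2)) (π / 2) ∈ 𝓝[<] (π / 2) :=
      Ioo_mem_nhdsLT_of_mem ⟨by linarith [Real.pi_pos], le_refl _⟩
    have hlim1 : Tendsto G (𝓝[<] (π / 2)) (𝓝 (G (π / 2))) :=
      (hGcont.continuousAt.tendsto).mono_left nhdsWithin_le_nhds
    have hlim2 : Tendsto (fun θ => Real.arctan (Real.tan θ / γ)) (𝓝[<] (π / 2)) (𝓝 (π / 2)) := by
      have h1 : Tendsto (fun θ => Real.tan θ / γ) (𝓝[<] (π / 2)) atTop :=
        Real.tendsto_tan_pi_div_two.atTop_div_const hγ0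
      exact (Real.tendsto_arctan_atTop.mono_right nhdsWithin_le_nhds).comp h1
    have heqv : G =ᶠ[𝓝[<] (π / 2)] fun θ => Real.arctan (Real.tan θ / γ) :=
      eventually_of_mem hmem (fun x hx => hGIoo x hx)
    have hlim1' : Tendsto (fun θ => Real.arctan (Real.tan θ / γ)) (𝓝[<] (π / 2))
        (𝓝 (G (π / 2))) := hlim1.congr' heqv
    exact tendsto_nhds_unique hlim1' hlim2
  -- ∫₀^π 1/g = π
  have hintpi : (∫ s in (0:ℝ)..π, 1 / gell γ s) = π := by
    have h1 := hper.intervalIntegral_add_eq (-(π / 2)) 0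
    have h2 : -(π / 2) + π = π / 2 := by ring
    rw [h2, zero_add] at h1
    have h4 : (∫ s in (-(π / 2))..(π / 2), 1 / gell γ s) = G (π / 2) - G (-(π / 2)) :=
      (intervalIntegral.integral_interval_sub_left (hfint 0 (π / 2)) (hfint 0 (-(π / 2)))).symm
    rw [← h1, h4, hGodd, hGhalf]
    ring
  -- part (ii)
  have part2 : (∫ θ in (0:ℝ)..(2 * π), 1 / gell γ θ) = 2 * π := by
    have hsplit := intervalIntegral.integral_add_adjacent_intervals
      (hfint 0 π) (hfint π (2 * π))
    have h2 := hper.intervalIntegral_add_eq π 0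
    rw [zero_add] at h2
    have h3 : π + π = 2 * π := by ring
    rw [h3] at h2
    rw [← hsplit, h2, hintpi]
    ring
  -- betaStr θ = G θ - θ
  have hbeta : ∀ θ, betaStr γ θ = G θ - θ := by
    intro θ
    unfold betaStr
    rw [intervalIntegral.integral_sub (hfint 0 θ) intervalIntegrable_const]
    simp [hGdef]
  -- oddness
  have hodd : ∀ θ, betaStr γ (-θ) = -betaStr γ θ := by
    intro θ
    unfold betaStr
    exact hoddgen _ (fun x => by show 1 / gell γ (-x) - 1 = 1 / gell γ x - 1; rw [hgeven]) θ
  -- periodicity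
  have hperiod : ∀ θ, betaStr γ (θ + π) = betaStr γ θ := by
    intro θ
    have hsplit := intervalIntegral.integral_add_adjacent_intervals
      (hFint 0 θ) (hFint θ (θ + π))
    have h2 := hFper.intervalIntegral_add_eq θ 0
    rw [zero_add] at h2
    have h3 : (∫ s in (0:ℝ)..π, (1 / gell γ s - 1)) = 0 := by
      rw [intervalIntegral.integral_sub (hfint 0 π) intervalIntegrable_const, hintpi]
      simp
    have : betaStr γ (θ + π) = betaStr γ θ + ∫ s in θ..(θ + π), (1 / gell γ s - 1) := by
      unfold betaStr; rw [← hsplit]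
    rw [this, h2, h3, add_zero]
  -- smoothness
  have hderivB : ∀ θ, HasDerivAt (betaStr γ) (1 / gell γ θ - 1) θ := by
    intro θ
    exact intervalIntegral.integral_hasDerivAt_right (hFint 0 θ)
      (hFcont.stronglyMeasurable.stronglyMeasurableAtFilter) hFcont.continuousAt
  have hsmooth : ContDiff ℝ (⊤ : ℕ∞) (betaStr γ) := by
    rw [contDiff_infty_iff_deriv]
    refine ⟨fun θ => (hderivB θ).differentiableAt, ?_⟩
    have hd : deriv (betaStr γ) = fun θ => 1 / gell γ θ - 1 :=
      funext fun θ => (hderivB θ).deriv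
    rw [hd]
    exact hFsmooth
  -- part (iii) equality on Ioo
  have heqI : ∀ θ ∈ Set.Ioo (-(π / 2)) (π / 2),
      betaStr γ θ = Real.arctan (Real.tan θ / γ) - θ := by
    intro θ hθ
    rw [hbeta θ, hGIoo θ hθ]
  exact ⟨part1, part2, hsmooth, hodd, hperiod, heqI⟩
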